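/- Let α be a Borel probability measure on L²((0,1]²), let y ∈ L²((0,1]²), and let ρ > 0 be such that α({ z ∈ L²((0,1]²) : ‖z − y‖ = ρ }) = 0. For each integer k ≥ 1 set d_k := 2^{2k}, let Φ_{d_k} : L²((0,1]²) → ℝ^{d_k} be the block-averaging discretisation at resolution d_k, let α_{d_k} := α ∘ Φ_{d_k}^{−1} and y_{d_k} := Φ_{d_k}(y). Then lim_{k→∞} α_{d_k}( B(y_{d_k}, √(d_k)·ρ) ) = α( B_{L²}(y, ρ) ). -/

import Mathlib

open MeasureTheory Filter
open scoped Topology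

open scoped ENNReal

/-- Lebesgue measure on the unit square `(0,1]²`. -/
noncomputable def unitSquareMeasure : Measure (ℝ × ℝ) :=
  (volume : Measure (ℝ × ℝ)).restrict (Set.Ioc 0 1 ×ˢ Set.Ioc 0 1)

/-- The dyadic square `(i/2^k, (i+1)/2^k] × (j/2^k, (j+1)/2^k]`. -/
def dyadicSquare (k : ℕ) (i j : Fin (2 ^ k)) : Set (ℝ × ℝ) :=
  Set.Ioc ((i : ℝ) / 2 ^ k) (((i : ℝ) + 1) / 2 ^ k) ×ˢ
    Set.Ioc ((j : ℝ) / 2 ^ k) (((j : ℝ) + 1) / 2 ^ k)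

/-- The block-averaging discretisation `Φ_d : L²((0,1]²) → ℝ^d`, `d = 2^{2k}`. -/
noncomputable def blockAvg (k : ℕ) (f : Lp ℝ 2 unitSquareMeasure) :
    EuclideanSpace ℝ (Fin (2 ^ k) × Fin (2 ^ k)) :=
  (EuclideanSpace.equiv (Fin (2 ^ k) × Fin (2 ^ k)) ℝ).symm
    fun p => 2 ^ (2 * k) * ∫ q in dyadicSquare k p.1 p.2, f q ∂unitSquareMeasure

namespace BildAux

abbrev Sq : Set (ℝ × ℝ) := Set.Ioc 0 1 ×ˢ Set.Ioc 0 1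

lemma measurableSet_Sq : MeasurableSet Sq := (measurableSet_Ioc).prod measurableSet_Ioc

lemma volume_prod_Ioc (a b c d : ℝ) :
    (volume : Measure (ℝ × ℝ)) (Set.Ioc a b ×ˢ Set.Ioc c d)
      = ENNReal.ofReal (b - a) * ENNReal.ofReal (d - c) := by
  rw [Measure.volume_eq_prod, Measure.prod_prod, Real.volume_Ioc, Real.volume_Ioc]

lemma volume_Sq : (volume : Measure (ℝ × ℝ)) Sq = 1 := by
  rw [Sq, volume_prod_Ioc]; norm_num

instance : IsFiniteMeasure unitSquareMeasure := by
  constructor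
  rw [unitSquareMeasure, Measure.restrict_apply MeasurableSet.univ, Set.univ_inter, volume_Sq]
  exact ENNReal.one_lt_top

lemma measurableSet_dyadicSquare (k : ℕ) (i j : Fin (2 ^ k)) :
    MeasurableSet (dyadicSquare k i j) := measurableSet_Ioc.prod measurableSet_Ioc

lemma Ioc_subset (k : ℕ) (i : Fin (2 ^ k)) :
    Set.Ioc ((i : ℝ) / 2 ^ k) (((i : ℝ) + 1) / 2 ^ k) ⊆ Set.Ioc 0 1 := by
  apply Set.Ioc_subset_Ioc
  · positivity
  · rw [div_le_one (by positivity)]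
    have : (i : ℝ) + 1 ≤ 2 ^ k := by
      have := i.is_lt
      exact_mod_cast Nat.succ_le_of_lt this
    simpa using this

lemma dyadicSquare_subset (k : ℕ) (i j : Fin (2 ^ k)) : dyadicSquare k i j ⊆ Sq :=
  Set.prod_mono (Ioc_subset k i) (Ioc_subset k j)

lemma measure_dyadicSquare (k : ℕ) (i j : Fin (2 ^ k)) :
    unitSquareMeasure (dyadicSquare k i j) = ENNReal.ofReal (((4 : ℝ) ^ k)⁻¹) := by
  rw [unitSquareMeasure, Measure.restrict_apply (measurableSet_dyadicSquare k i j),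
    Set.inter_eq_left.2 (dyadicSquare_subset k i j), dyadicSquare, volume_prod_Ioc]
  have hd : ∀ (i : Fin (2 ^ k)), ((i:ℝ) + 1) / 2 ^ k - (i:ℝ) / 2 ^ k = ((2:ℝ) ^ k)⁻¹ := by
    intro i
    rw [div_sub_div_same]
    ring_nf
  rw [hd, hd, ← ENNReal.ofReal_mul (by positivity)]
  congr 1
  rw [← mul_inv, ← mul_pow]
  norm_num

lemma measure_dyadicSquare_ne_top (k : ℕ) (i j : Fin (2 ^ k)) :
    unitSquareMeasure (dyadicSquare k i j) ≠ ∞ := by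
  rw [measure_dyadicSquare]; exact ENNReal.ofReal_ne_top

lemma measure_dyadicSquare_toReal (k : ℕ) (i j : Fin (2 ^ k)) :
    (unitSquareMeasure (dyadicSquare k i j)).toReal = ((4 : ℝ) ^ k)⁻¹ := by
  rw [measure_dyadicSquare, ENNReal.toReal_ofReal (by positivity)]

lemma Ioc_disjoint (k : ℕ) {i i' : Fin (2 ^ k)} (h : i ≠ i') :
    Disjoint (Set.Ioc ((i : ℝ) / 2 ^ k) (((i : ℝ) + 1) / 2 ^ k))
      (Set.Ioc ((i' : ℝ) / 2 ^ k) (((i' : ℝ) + 1) / 2 ^ k)) := by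
  rw [Set.Ioc_disjoint_Ioc]
  have h2 : (0:ℝ) < 2 ^ k := by positivity
  rcases lt_or_gt_of_ne (fun hc => h (Fin.ext hc)) with hlt | hlt
  · have : (i : ℝ) + 1 ≤ (i' : ℝ) := by exact_mod_cast Nat.succ_le_of_lt hlt
    calc min (((i:ℝ)+1)/2^k) (((i':ℝ)+1)/2^k) ≤ ((i:ℝ)+1)/2^k := min_le_left _ _
      _ ≤ (i':ℝ)/2^k := by gcongr
      _ ≤ max ((i:ℝ)/2^k) ((i':ℝ)/2^k) := le_max_right _ _
  · have : (i' : ℝ) + 1 ≤ (i : ℝ) := by exact_mod_cast Nat.succ_le_of_lt hlt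
    calc min (((i:ℝ)+1)/2^k) (((i':ℝ)+1)/2^k) ≤ ((i':ℝ)+1)/2^k := min_le_right _ _
      _ ≤ (i:ℝ)/2^k := by gcongr
      _ ≤ max ((i:ℝ)/2^k) ((i':ℝ)/2^k) := le_max_left _ _

lemma dyadicSquare_pairwise_disjoint (k : ℕ) :
    Pairwise (Function.onFun Disjoint (fun p : Fin (2 ^ k) × Fin (2 ^ k) =>
      dyadicSquare k p.1 p.2)) := by
  rintro ⟨i, j⟩ ⟨i', j'⟩ hne
  rcases Prod.mk.injEq .. ▸ fun h => hne h with h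
  by_cases hi : i = i'
  · have hj : j ≠ j' := fun hj => hne (by simp [hi, hj])
    exact Set.disjoint_of_subset (Set.prod_mono_right Set.Subset.rfl)
      (Set.prod_mono_right Set.Subset.rfl) (Set.Disjoint.set_prod_right (Ioc_disjoint k hj) _ _)
  · exact Set.Disjoint.set_prod_left (Ioc_disjoint k hi) _ _

lemma mem_Ioc_dyadic (k : ℕ) {u : ℝ} (hu : u ∈ Set.Ioc (0:ℝ) 1) :
    ∃ i : Fin (2 ^ k), u ∈ Set.Ioc ((i : ℝ) / 2 ^ k) (((i : ℝ) + 1) / 2 ^ k) := by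
  have h2 : (0:ℝ) < 2 ^ k := by positivity
  set n := ⌈u * 2 ^ k⌉₊ with hn
  have hpos : 0 < n := Nat.ceil_pos.2 (by nlinarith [hu.1])
  have hle : n ≤ 2 ^ k := by
    have : u * 2 ^ k ≤ 2 ^ k := by nlinarith [hu.2]
    calc n ≤ ⌈(2:ℝ) ^ k⌉₊ := Nat.ceil_le_ceil this
      _ = 2 ^ k := by
          rw [show ((2:ℝ) ^ k) = ((2 ^ k : ℕ) : ℝ) by push_cast; ring, Nat.ceil_natCast]
  have h1n : 1 ≤ n := hpos
  refine ⟨⟨n - 1, by omega⟩, ?_, ?_⟩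
  · have hlt : ((n:ℝ) - 1) < u * 2 ^ k := by
      have h := Nat.lt_ceil.1 (show n - 1 < n from by omega)
      rwa [Nat.cast_sub h1n, Nat.cast_one] at h
    rw [div_lt_iff₀ h2]
    simp only [Fin.val_mk]
    rw [Nat.cast_sub h1n, Nat.cast_one]
    linarith
  · have hle' : u * 2 ^ k ≤ n := Nat.le_ceil _
    rw [le_div_iff₀ h2]
    simp only [Fin.val_mk]
    rw [Nat.cast_sub h1n, Nat.cast_one]
    linarith

lemma iUnion_dyadicSquare (k : ℕ) :
    (⋃ p : Fin (2 ^ k) × Fin (2 ^ k), dyadicSquare k p.1 p.2) = Sq := by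
  apply Set.Subset.antisymm
  · exact Set.iUnion_subset fun p => dyadicSquare_subset k p.1 p.2
  · rintro ⟨u, v⟩ huv
    obtain ⟨i, hi⟩ := mem_Ioc_dyadic k huv.1
    obtain ⟨j, hj⟩ := mem_Ioc_dyadic k huv.2
    exact Set.mem_iUnion.2 ⟨⟨i, j⟩, hi, hj⟩

set_option maxHeartbeats 800000 in
lemma restrict_Sq : unitSquareMeasure.restrict Sq = unitSquareMeasure := by
  rw [unitSquareMeasure, Measure.restrict_restrict measurableSet_Sq, Set.inter_self]

lemma integral_eq_sum (k : ℕ) {h : ℝ × ℝ → ℝ} (hint : Integrable h unitSquareMeasure) :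
    ∫ x, h x ∂unitSquareMeasure
      = ∑ p : Fin (2 ^ k) × Fin (2 ^ k), ∫ x in dyadicSquare k p.1 p.2, h x ∂unitSquareMeasure := by
  have h1 : ∫ x, h x ∂unitSquareMeasure = ∫ x in Sq, h x ∂unitSquareMeasure := by
    rw [restrict_Sq]
  rw [h1, ← iUnion_dyadicSquare k]
  exact integral_iUnion_fintype (μ := unitSquareMeasure) (f := h)
      (fun p => measurableSet_dyadicSquare k p.1 p.2)
      (dyadicSquare_pairwise_disjoint k) (fun p => hint.integrableOn)

/-- The square of the discretised vector, normalised by `1/d`. -/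
noncomputable def Ik (k : ℕ) (h : ℝ × ℝ → ℝ) : ℝ :=
  ∑ p : Fin (2 ^ k) × Fin (2 ^ k),
    (4 : ℝ) ^ k * (∫ x in dyadicSquare k p.1 p.2, h x ∂unitSquareMeasure) ^ 2

lemma setIntegral_sq_sub {h : ℝ × ℝ → ℝ} (hint : Integrable h unitSquareMeasure)
    (hsq : Integrable (fun x => h x ^ 2) unitSquareMeasure) (k : ℕ) (i j : Fin (2 ^ k)) :
    (∫ x in dyadicSquare k i j, h x ^ 2 ∂unitSquareMeasure)
        - (4 : ℝ) ^ k * (∫ x in dyadicSquare k i j, h x ∂unitSquareMeasure) ^ 2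
      = ∫ x in dyadicSquare k i j,
          (h x - (4 : ℝ) ^ k * ∫ x in dyadicSquare k i j, h x ∂unitSquareMeasure) ^ 2
            ∂unitSquareMeasure := by
  set Q := dyadicSquare k i j with hQ
  set a := (4 : ℝ) ^ k * ∫ x in Q, h x ∂unitSquareMeasure with ha
  have h4 : (0:ℝ) < 4 ^ k := by positivity
  have e : (fun x => (h x - a) ^ 2) = fun x => (h x ^ 2 - 2 * a * h x) + a ^ 2 := by
    funext x; ring
  have hI1 : IntegrableOn (fun x => h x ^ 2 - 2 * a * h x) Q unitSquareMeasure :=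
    (hsq.integrableOn).sub ((hint.integrableOn).const_mul (2 * a))
  have hI2 : IntegrableOn (fun _ : ℝ × ℝ => a ^ 2) Q unitSquareMeasure :=
    integrableOn_const (measure_dyadicSquare_ne_top k i j)
  rw [e, integral_add hI1 hI2,
    integral_sub hsq.integrableOn ((hint.integrableOn).const_mul (2 * a)),
    integral_const_mul, setIntegral_const, measureReal_def, measure_dyadicSquare_toReal, smul_eq_mul, ha]
  field_simp
  ring

lemma setIntegral_sq_sub_nonneg {h : ℝ × ℝ → ℝ} (hint : Integrable h unitSquareMeasure)
    (hsq : Integrable (fun x => h x ^ 2) unitSquareMeasure) (k : ℕ) (i j : Fin (2 ^ k)) :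
    (4 : ℝ) ^ k * (∫ x in dyadicSquare k i j, h x ∂unitSquareMeasure) ^ 2
      ≤ ∫ x in dyadicSquare k i j, h x ^ 2 ∂unitSquareMeasure := by
  have := setIntegral_sq_sub hint hsq k i j
  have hnn : 0 ≤ ∫ x in dyadicSquare k i j,
      (h x - (4 : ℝ) ^ k * ∫ x in dyadicSquare k i j, h x ∂unitSquareMeasure) ^ 2
        ∂unitSquareMeasure :=
    setIntegral_nonneg (measurableSet_dyadicSquare k i j) (fun x _ => sq_nonneg _)
  linarith

lemma Ik_le {h : ℝ × ℝ → ℝ} (hint : Integrable h unitSquareMeasure)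
    (hsq : Integrable (fun x => h x ^ 2) unitSquareMeasure) (k : ℕ) :
    Ik k h ≤ ∫ x, h x ^ 2 ∂unitSquareMeasure := by
  rw [Ik, integral_eq_sum k hsq]
  exact Finset.sum_le_sum fun p _ => setIntegral_sq_sub_nonneg hint hsq k p.1 p.2

lemma Ik_nonneg (k : ℕ) (h : ℝ × ℝ → ℝ) : 0 ≤ Ik k h :=
  Finset.sum_nonneg fun p _ => by positivity

lemma integrable_coe (f : Lp ℝ 2 unitSquareMeasure) : Integrable ⇑f unitSquareMeasure :=
  (Lp.memLp f).integrable (by norm_num)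

lemma integrable_sq_coe (f : Lp ℝ 2 unitSquareMeasure) :
    Integrable (fun x => f x ^ 2) unitSquareMeasure := (Lp.memLp f).integrable_sq

lemma integral_sq_eq (f : Lp ℝ 2 unitSquareMeasure) :
    ∫ x, f x ^ 2 ∂unitSquareMeasure = ‖f‖ ^ 2 := by
  rw [← real_inner_self_eq_norm_sq, L2.inner_def]
  simp [RCLike.inner_apply, sq]

lemma blockAvg_apply (k : ℕ) (f : Lp ℝ 2 unitSquareMeasure) (p : Fin (2 ^ k) × Fin (2 ^ k)) :
    blockAvg k f p = 2 ^ (2 * k) * ∫ q in dyadicSquare k p.1 p.2, f q ∂unitSquareMeasure := rfl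

/-- The seminorm given by the discretisation at level `k`. -/
noncomputable def sk (k : ℕ) (f : Lp ℝ 2 unitSquareMeasure) : ℝ := Real.sqrt (Ik k ⇑f)

lemma sk_nonneg (k : ℕ) (f : Lp ℝ 2 unitSquareMeasure) : 0 ≤ sk k f := Real.sqrt_nonneg _

lemma norm_blockAvg (k : ℕ) (f : Lp ℝ 2 unitSquareMeasure) :
    ‖blockAvg k f‖ = 2 ^ k * sk k f := by
  rw [EuclideanSpace.norm_eq]
  have : ∀ p : Fin (2 ^ k) × Fin (2 ^ k), ‖blockAvg k f p‖ ^ 2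
      = (4:ℝ) ^ k * ((4:ℝ) ^ k * (∫ q in dyadicSquare k p.1 p.2, f q ∂unitSquareMeasure) ^ 2) := by
    intro p
    rw [blockAvg_apply, Real.norm_eq_abs, sq_abs]
    have h4 : ((2:ℝ)) ^ (2 * k) = 4 ^ k := by
      rw [pow_mul]; norm_num
    rw [h4]; ring
  simp only [this]
  rw [← Finset.mul_sum, Real.sqrt_mul (by positivity), sk, Ik]
  congr 1
  rw [show ((4:ℝ) ^ k) = (2 ^ k) ^ 2 by rw [← pow_mul, pow_mul']; norm_num, Real.sqrt_sq (by positivity)]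

lemma blockAvg_sub (k : ℕ) (f g : Lp ℝ 2 unitSquareMeasure) :
    blockAvg k (f - g) = blockAvg k f - blockAvg k g := by
  ext p
  have hcongr : ∫ q in dyadicSquare k p.1 p.2, (f - g) q ∂unitSquareMeasure
      = ∫ q in dyadicSquare k p.1 p.2, (f q - g q) ∂unitSquareMeasure := by
    refine setIntegral_congr_ae (measurableSet_dyadicSquare k p.1 p.2) ?_
    filter_upwards [Lp.coeFn_sub f g] with x hx _
    simpa using hx
  have : blockAvg k (f - g) p = blockAvg k f p - blockAvg k g p := by
    rw [blockAvg_apply, blockAvg_apply, blockAvg_apply, hcongr,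
      integral_sub (integrable_coe f).integrableOn (integrable_coe g).integrableOn]
    ring
  exact this

lemma sk_le_norm (k : ℕ) (f : Lp ℝ 2 unitSquareMeasure) : sk k f ≤ ‖f‖ := by
  rw [sk, show ‖f‖ = Real.sqrt (‖f‖ ^ 2) from (Real.sqrt_sq (norm_nonneg f)).symm]
  refine Real.sqrt_le_sqrt ?_
  rw [← integral_sq_eq f]
  exact Ik_le (integrable_coe f) (integrable_sq_coe f) k

lemma abs_sk_sub_le (k : ℕ) (f g : Lp ℝ 2 unitSquareMeasure) :
    |sk k f - sk k g| ≤ ‖f - g‖ := by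
  have h2 : (0:ℝ) < 2 ^ k := by positivity
  have hnorm : ∀ h : Lp ℝ 2 unitSquareMeasure, sk k h = ‖blockAvg k h‖ / 2 ^ k := by
    intro h; rw [norm_blockAvg]; field_simp
  rw [hnorm, hnorm, div_sub_div_same, abs_div, abs_of_pos h2, div_le_iff₀ h2]
  calc |‖blockAvg k f‖ - ‖blockAvg k g‖| ≤ ‖blockAvg k f - blockAvg k g‖ :=
        abs_norm_sub_norm_le _ _
    _ = ‖blockAvg k (f - g)‖ := by rw [blockAvg_sub]
    _ = 2 ^ k * sk k (f - g) := norm_blockAvg k _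
    _ ≤ 2 ^ k * ‖f - g‖ := by
        have := sk_le_norm k (f - g)
        nlinarith
    _ = ‖f - g‖ * 2 ^ k := by ring

lemma tendsto_Ik_continuous {g : ℝ × ℝ → ℝ} (hgc : Continuous g) (hgs : HasCompactSupport g)
    (hgint : Integrable g unitSquareMeasure)
    (hgsq : Integrable (fun x => g x ^ 2) unitSquareMeasure) :
    Tendsto (fun k => Ik k g) atTop (𝓝 (∫ x, g x ^ 2 ∂unitSquareMeasure)) := by
  have huc : UniformContinuous g := hgs.uniformContinuous_of_continuous hgc
  rw [Metric.tendsto_atTop]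
  intro ε hε
  set ε' : ℝ := min 1 (ε / 2) with hε'def
  have hε' : 0 < ε' := lt_min one_pos (by linarith)
  have hε'sq : ε' ^ 2 < ε := by
    have h1 : ε' ≤ 1 := min_le_left _ _
    have h2 : ε' ≤ ε / 2 := min_le_right _ _
    nlinarith
  obtain ⟨δ, hδ, hδε⟩ := Metric.uniformContinuous_iff.1 huc ε' hε'
  obtain ⟨N, hN⟩ := pow_unbounded_of_one_lt δ⁻¹ (by norm_num : (1:ℝ) < 2)
  refine ⟨N, fun k hk => ?_⟩
  have h2k : (0:ℝ) < 2 ^ k := by positivity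
  have h4k : (0:ℝ) < 4 ^ k := by positivity
  have hδk : ((2:ℝ) ^ k)⁻¹ < δ := by
    have h1 : δ⁻¹ < 2 ^ k := lt_of_lt_of_le hN (by gcongr; norm_num)
    have := inv_strictAnti₀ (by positivity) h1
    rwa [inv_inv] at this
  -- pointwise estimate on each square
  have key : ∀ (i j : Fin (2 ^ k)),
      (∫ x in dyadicSquare k i j, g x ^ 2 ∂unitSquareMeasure)
        - (4:ℝ) ^ k * (∫ x in dyadicSquare k i j, g x ∂unitSquareMeasure) ^ 2
      ≤ ε' ^ 2 * ((4:ℝ) ^ k)⁻¹ := by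
    intro i j
    set Q := dyadicSquare k i j with hQdef
    set a : ℝ := (4:ℝ) ^ k * ∫ x in Q, g x ∂unitSquareMeasure with hadef
    rw [setIntegral_sq_sub hgint hgsq k i j]
    have hQmeas := measurableSet_dyadicSquare k i j
    have hQlt : unitSquareMeasure Q < ∞ := (measure_dyadicSquare_ne_top k i j).lt_top
    have hbound : ∀ x ∈ Q, |g x - a| ≤ ε' := by
      intro x hx
      have hstep : ∀ u ∈ Q, ‖g u - g x‖ ≤ ε' := by
        intro u hu
        have hdist : dist u x < δ := by
          rw [Prod.dist_eq]
          have hc : ∀ (w z lo : ℝ), w ∈ Set.Ioc lo (lo + (2^k)⁻¹) → z ∈ Set.Ioc lo (lo + (2^k)⁻¹)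
              → dist w z ≤ (2^k)⁻¹ := by
            intro w z lo hw hz
            rw [Real.dist_eq]
            rw [Set.mem_Ioc] at hw hz
            rw [abs_le]; constructor <;> linarith [hw.1, hw.2, hz.1, hz.2]
          have hIoc : ∀ (m : Fin (2 ^ k)), Set.Ioc ((m:ℝ)/2^k) (((m:ℝ)+1)/2^k)
              = Set.Ioc ((m:ℝ)/2^k) ((m:ℝ)/2^k + (2^k)⁻¹) := by
            intro m; congr 1; field_simp
          have h1 := hc u.1 x.1 _ (hIoc i ▸ hu.1) (hIoc i ▸ hx.1)
          have h2 := hc u.2 x.2 _ (hIoc j ▸ hu.2) (hIoc j ▸ hx.2)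
          exact lt_of_le_of_lt (max_le h1 h2) hδk
        exact le_of_lt (hδε hdist)
      have hint : ∫ u in Q, (g u - g x) ∂unitSquareMeasure
          = (∫ u in Q, g u ∂unitSquareMeasure) - g x * ((4:ℝ)^k)⁻¹ := by
        rw [integral_sub hgint.integrableOn (integrableOn_const hQlt.ne),
          setIntegral_const, measureReal_def, measure_dyadicSquare_toReal, smul_eq_mul]
        ring
      have hnorm := norm_setIntegral_le_of_norm_le_const (μ := unitSquareMeasure)
        (f := fun u => g u - g x) hQlt hstep
      rw [hint, Real.norm_eq_abs, measureReal_def, measure_dyadicSquare_toReal] at hnorm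
      have : a - g x = (4:ℝ)^k * ((∫ u in Q, g u ∂unitSquareMeasure) - g x * ((4:ℝ)^k)⁻¹) := by
        rw [hadef]; field_simp
      rw [abs_sub_comm, this, abs_mul, abs_of_pos h4k]
      calc (4:ℝ)^k * |(∫ u in Q, g u ∂unitSquareMeasure) - g x * ((4:ℝ)^k)⁻¹|
          ≤ (4:ℝ)^k * (ε' * ((4:ℝ)^k)⁻¹) := by gcongr
        _ = ε' := by field_simp
    have hsqb : ∀ x ∈ Q, ‖(g x - a) ^ 2‖ ≤ ε' ^ 2 := by
      intro x hx
      rw [Real.norm_eq_abs, abs_of_nonneg (sq_nonneg _)]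
      have h := hbound x hx
      nlinarith [abs_nonneg (g x - a), sq_abs (g x - a)]
    have := norm_setIntegral_le_of_norm_le_const (μ := unitSquareMeasure)
      (f := fun x => (g x - a)^2) hQlt hsqb
    rw [measureReal_def, measure_dyadicSquare_toReal, Real.norm_eq_abs] at this
    calc ∫ x in Q, (g x - a) ^ 2 ∂unitSquareMeasure
        ≤ |∫ x in Q, (g x - a) ^ 2 ∂unitSquareMeasure| := le_abs_self _
      _ ≤ ε' ^ 2 * ((4:ℝ)^k)⁻¹ := this
  -- sum up
  have hsum : (∫ x, g x ^ 2 ∂unitSquareMeasure) - Ik k g ≤ ε' ^ 2 := by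
    rw [integral_eq_sum k hgsq, Ik, ← Finset.sum_sub_distrib]
    calc (∑ p : Fin (2^k) × Fin (2^k), ((∫ x in dyadicSquare k p.1 p.2, g x ^ 2 ∂unitSquareMeasure)
            - (4:ℝ) ^ k * (∫ x in dyadicSquare k p.1 p.2, g x ∂unitSquareMeasure) ^ 2))
        ≤ ∑ _p : Fin (2^k) × Fin (2^k), ε' ^ 2 * ((4:ℝ)^k)⁻¹ :=
          Finset.sum_le_sum fun p _ => key p.1 p.2
      _ = ε' ^ 2 := by
          rw [Finset.sum_const]
          simp only [Finset.card_univ, Fintype.card_prod, Fintype.card_fin, nsmul_eq_mul]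
          push_cast
          rw [show ((2:ℝ)^k * 2^k) = 4^k by rw [← mul_pow]; norm_num]
          field_simp
  have hlow : Ik k g ≤ ∫ x, g x ^ 2 ∂unitSquareMeasure := Ik_le hgint hgsq k
  rw [Real.dist_eq, abs_sub_comm, abs_of_nonneg (by linarith)]
  linarith

lemma Ik_congr (k : ℕ) {h1 h2 : ℝ × ℝ → ℝ} (h : h1 =ᵐ[unitSquareMeasure] h2) :
    Ik k h1 = Ik k h2 := by
  unfold Ik
  refine Finset.sum_congr rfl fun p _ => ?_
  rw [setIntegral_congr_ae (measurableSet_dyadicSquare k p.1 p.2)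
    (by filter_upwards [h] with x hx _ using hx)]

lemma tendsto_sk (f : Lp ℝ 2 unitSquareMeasure) :
    Tendsto (fun k => sk k f) atTop (𝓝 ‖f‖) := by
  rw [Metric.tendsto_atTop]
  intro ε hε
  -- a measurable representative
  obtain ⟨f', hf'meas, hff'⟩ := Lp.aestronglyMeasurable f
  have hff'vol : ∀ᵐ x ∂(volume : Measure (ℝ × ℝ)), x ∈ Sq → f x = f' x := by
    rw [← ae_restrict_iff' measurableSet_Sq]
    exact hff'
  have hindic : Sq.indicator ⇑f =ᵐ[(volume : Measure (ℝ × ℝ))] Sq.indicator f' := by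
    filter_upwards [hff'vol] with x hx
    by_cases hxS : x ∈ Sq
    · rw [Set.indicator_of_mem hxS, Set.indicator_of_mem hxS, hx hxS]
    · rw [Set.indicator_of_notMem hxS, Set.indicator_of_notMem hxS]
  have hmem : MemLp (Sq.indicator ⇑f) 2 (volume : Measure (ℝ × ℝ)) := by
    constructor
    · exact (hf'meas.indicator measurableSet_Sq).aestronglyMeasurable.congr hindic.symm
    · rw [eLpNorm_indicator_eq_eLpNorm_restrict measurableSet_Sq]
      exact Lp.eLpNorm_lt_top f
  obtain ⟨g, hgsupp, hgnorm, hgcont, hgmem⟩ :=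
    hmem.exists_hasCompactSupport_eLpNorm_sub_le (by norm_num : (2:ℝ≥0∞) ≠ ∞)
      (ε := ENNReal.ofReal (ε/4)) (ENNReal.ofReal_pos.2 (by positivity : (0:ℝ) < ε/4)).ne'
  have hgmem2 : MemLp g 2 unitSquareMeasure := hgmem.restrict Sq
  have hgint : Integrable g unitSquareMeasure := hgmem2.integrable (by norm_num)
  have hgsq : Integrable (fun x => g x ^ 2) unitSquareMeasure := hgmem2.integrable_sq
  set g' : Lp ℝ 2 unitSquareMeasure := hgmem2.toLp g with hg'def
  -- the approximation bound
  have hfg' : ‖f - g'‖ ≤ ε / 4 := by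
    rw [Lp.norm_def]
    have hae : ⇑(f - g') =ᵐ[unitSquareMeasure] fun x => Sq.indicator (⇑f) x - g x := by
      filter_upwards [Lp.coeFn_sub f g', hgmem2.coeFn_toLp,
        ae_restrict_mem (μ := volume) measurableSet_Sq] with x h1 h2 h3
      rw [h1]
      simp only [Pi.sub_apply, hg'def, h2, Set.indicator_of_mem h3]
    rw [eLpNorm_congr_ae hae]
    have hle : eLpNorm (fun x => Sq.indicator (⇑f) x - g x) 2 unitSquareMeasure
        ≤ ENNReal.ofReal (ε/4) := by
      refine le_trans (eLpNorm_mono_measure _ Measure.restrict_le_self) ?_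
      exact hgnorm
    refine le_trans (ENNReal.toReal_mono ENNReal.ofReal_ne_top hle) ?_
    rw [ENNReal.toReal_ofReal (by positivity)]
  -- convergence for the continuous approximation
  have hIkg' : ∀ k, sk k g' = Real.sqrt (Ik k g) := by
    intro k
    rw [sk, Ik_congr k hgmem2.coeFn_toLp]
  have hnormg' : ∫ x, g x ^ 2 ∂unitSquareMeasure = ‖g'‖ ^ 2 := by
    rw [← integral_sq_eq g']
    refine integral_congr_ae ?_
    filter_upwards [hgmem2.coeFn_toLp] with x hx
    rw [hx]
  have htends : Tendsto (fun k => sk k g') atTop (𝓝 ‖g'‖) := by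
    have h1 := tendsto_Ik_continuous hgcont hgsupp hgint hgsq
    have h2 := (Real.continuous_sqrt.tendsto _).comp h1
    simp only [Function.comp_def] at h2
    rw [hnormg', Real.sqrt_sq (norm_nonneg g')] at h2
    simpa only [hIkg'] using h2
  obtain ⟨N, hN⟩ := Metric.tendsto_atTop.1 htends (ε/4) (by positivity)
  refine ⟨N, fun k hk => ?_⟩
  have h1 : |sk k f - sk k g'| ≤ ‖f - g'‖ := abs_sk_sub_le k f g'
  have h2 : |sk k g' - ‖g'‖| < ε/4 := by
    have := hN k hk
    rwa [Real.dist_eq] at this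
  have h3 : |‖g'‖ - ‖f‖| ≤ ‖f - g'‖ := by
    calc |‖g'‖ - ‖f‖| ≤ ‖g' - f‖ := abs_norm_sub_norm_le _ _
      _ = ‖f - g'‖ := norm_sub_rev _ _
  rw [Real.dist_eq]
  calc |sk k f - ‖f‖| ≤ |sk k f - sk k g'| + |sk k g' - ‖f‖| := abs_sub_le _ _ _
    _ ≤ |sk k f - sk k g'| + (|sk k g' - ‖g'‖| + |‖g'‖ - ‖f‖|) := by
        gcongr; exact abs_sub_le _ _ _
    _ < ε := by linarith

lemma continuous_blockAvg (k : ℕ) : Continuous (blockAvg k) := by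
  apply ((EuclideanSpace.equiv (Fin (2 ^ k) × Fin (2 ^ k)) ℝ).symm.continuous).comp
  apply continuous_pi
  intro p
  refine continuous_const.mul ?_
  have : (fun f : Lp ℝ 2 unitSquareMeasure =>
        ∫ q in dyadicSquare k p.1 p.2, f q ∂unitSquareMeasure)
      = fun f : Lp ℝ 2 unitSquareMeasure =>
        (inner (𝕜 := ℝ) (indicatorConstLp 2 (measurableSet_dyadicSquare k p.1 p.2)
          (measure_dyadicSquare_ne_top k p.1 p.2) (1:ℝ)) f) := by
    funext f
    exact (L2.inner_indicatorConstLp_one (measurableSet_dyadicSquare k p.1 p.2)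
      (measure_dyadicSquare_ne_top k p.1 p.2) f).symm
  rw [this]
  exact continuous_const.inner continuous_id

lemma sqrt_pow (k : ℕ) : Real.sqrt (2 ^ (2 * k)) = 2 ^ k := by
  rw [show ((2:ℝ) ^ (2 * k)) = ((2:ℝ) ^ k) ^ 2 by rw [← pow_mul, mul_comm], Real.sqrt_sq (by positivity)]

lemma mem_preimage_iff (k : ℕ) (y z : Lp ℝ 2 unitSquareMeasure) (ρ : ℝ) :
    blockAvg k z ∈ Metric.closedBall (blockAvg k y) (Real.sqrt (2 ^ (2 * k)) * ρ)
      ↔ sk k (z - y) ≤ ρ := by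
  rw [Metric.mem_closedBall, dist_eq_norm, ← blockAvg_sub, norm_blockAvg, sqrt_pow]
  have h2 : (0:ℝ) < 2 ^ k := by positivity
  exact mul_le_mul_iff_right₀ h2

end BildAux

/-- Equation (e:bilder) of the paper: the mass that the discretised laws assign to the
blown-up Euclidean balls converges to the `L²`-mass of the original ball, provided the
boundary sphere carries no mass. -/
theorem stmt14
    [MeasurableSpace (Lp ℝ 2 unitSquareMeasure)] [BorelSpace (Lp ℝ 2 unitSquareMeasure)]
    (α : Measure (Lp ℝ 2 unitSquareMeasure)) [IsProbabilityMeasure α]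
    (y : Lp ℝ 2 unitSquareMeasure) (ρ : ℝ) (hρ : 0 < ρ)
    (hsphere : α {z | ‖z - y‖ = ρ} = 0) :
    Tendsto
      (fun k : ℕ => Measure.map (blockAvg k) α
        (Metric.closedBall (blockAvg k y) (Real.sqrt (2 ^ (2 * k)) * ρ)))
      atTop (nhds (α (Metric.closedBall y ρ))) := by
  have hmeas : ∀ k, Measurable (blockAvg k) := fun k => (BildAux.continuous_blockAvg k).measurable
  have hmap : (fun k : ℕ => Measure.map (blockAvg k) α
        (Metric.closedBall (blockAvg k y) (Real.sqrt (2 ^ (2 * k)) * ρ)))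
      = fun k : ℕ => α (blockAvg k ⁻¹'
          Metric.closedBall (blockAvg k y) (Real.sqrt (2 ^ (2 * k)) * ρ)) :=
    funext fun k => Measure.map_apply (hmeas k) measurableSet_closedBall
  rw [hmap]
  apply MeasureTheory.tendsto_measure_of_ae_tendsto_indicator_of_isFiniteMeasure atTop
    measurableSet_closedBall
    (fun k => (hmeas k) measurableSet_closedBall)
  have hae : ∀ᵐ z ∂α, ‖z - y‖ ≠ ρ := by
    rw [ae_iff]
    simpa using hsphere
  filter_upwards [hae] with z hz
  rcases lt_or_gt_of_ne hz with hlt | hgt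
  · refine Filter.Eventually.of_forall fun k => ?_
    rw [Set.mem_preimage, BildAux.mem_preimage_iff, Metric.mem_closedBall, dist_eq_norm]
    constructor
    · intro _; exact le_of_lt hlt
    · intro _; exact le_trans (BildAux.sk_le_norm k (z - y)) (le_of_lt hlt)
  · have hev : ∀ᶠ k in atTop, ρ < BildAux.sk k (z - y) :=
      (BildAux.tendsto_sk (z - y)).eventually (eventually_gt_nhds hgt)
    filter_upwards [hev] with k hk
    rw [Set.mem_preimage, BildAux.mem_preimage_iff, Metric.mem_closedBall, dist_eq_norm]
    constructor
    · intro h; exact absurd h (not_le.2 hk)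
    · intro h; exact absurd h (not_le.2 hgt)
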